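/- For all integers m, k ≥ 1 and every integer j with 1 ≤ j ≤ k+1, if f(j·m, x, s) ≠ 0 then d(0, m, s, k, j) = s^{−k} · (fac(k+1, x, s, m) / f(j·m, x, s)) · (−s)^{m·binom(k,2)} · q^{binom(k,2)·binom(m+1,2)} · d(0, m, q^m·s, k−1, j−1). -/

import Mathlib

open Finset

variable {K : Type*} [Field K]

noncomputable def qFibPos (q x t : K) : ℕ → K
  | 0 => 0
  | 1 => 1
  | n + 2 => x * qFibPos q x t (n + 1) + q ^ n * t * qFibPos q x t n

noncomputable def qFibNeg (q x t : K) : ℕ → K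
  | 0 => 0
  | 1 => q / t
  | m + 2 => (qFibNeg q x t m - x * qFibNeg q x t (m + 1)) * q ^ (m + 2) / t

/-- The Carlitz q-Fibonacci polynomial `f(n, x, t)` for `n : ℤ`, defined by `f 0 = 0`,
`f 1 = 1` and `f n = x * f (n-1) + q^(n-2) * t * f (n-2)`, solved backwards for `n < 0`. -/
noncomputable def qFib (q x t : K) : ℤ → K
  | Int.ofNat n => qFibPos q x t n
  | Int.negSucc m => qFibNeg q x t (m + 1)

/-- `fac(k, x, t, m) = ∏_{i=1}^{k} f(i·m, x, t)`. -/
noncomputable def qFac (q x t : K) (k m : ℕ) : K :=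
  ∏ i ∈ Finset.range k, qFib q x t (((i : ℤ) + 1) * m)

/-- The determinant
`d(n, m, s, k, j) = det( f(n+m(i+[i≥j]),x,s)^h · f(n+m(i+[i≥j])-1,x,qs)^{k-h} )_{i,h=0}^{k}`. -/
noncomputable def ddet (q x s : K) (n : ℤ) (m k j : ℕ) : K :=
  Matrix.det (Matrix.of fun i h : Fin (k + 1) =>
    qFib q x s (n + m * ((i : ℕ) + if j ≤ (i : ℕ) then 1 else 0)) ^ (h : ℕ) *
      qFib q x (q * s) (n + m * ((i : ℕ) + if j ≤ (i : ℕ) then 1 else 0) - 1) ^ (k - (h : ℕ)))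

lemma qFib_zero (q x t : K) : qFib q x t 0 = 0 := rfl
lemma qFib_one (q x t : K) : qFib q x t 1 = 1 := rfl
lemma qFib_neg_one (q x t : K) : qFib q x t (-1) = q / t := rfl
lemma qFib_natCast (q x t : K) (n : ℕ) : qFib q x t n = qFibPos q x t n := rfl

lemma qFib_rec_nat (q x t : K) (n : ℕ) :
    qFib q x t ((n : ℤ) + 2) = x * qFib q x t ((n : ℤ) + 1) + q ^ n * t * qFib q x t n := by
  have h2 : ((n : ℤ) + 2) = ((n + 2 : ℕ) : ℤ) := by push_cast; ring
  have h1 : ((n : ℤ) + 1) = ((n + 1 : ℕ) : ℤ) := by push_cast; ring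
  rw [h2, h1, qFib_natCast, qFib_natCast, qFib_natCast]
  rfl

lemma qFib_rec_int (q x t : K) (hq : q ≠ 0) (ht : t ≠ 0) (n : ℤ) :
    qFib q x t (n + 2) = x * qFib q x t (n + 1) + q ^ n * t * qFib q x t n := by
  obtain ⟨n, rfl | rfl⟩ := Int.eq_nat_or_neg n
  · rw [qFib_rec_nat, zpow_natCast]
  · -- n = -(m : ℤ)
    rcases n with _ | _ | _ | n
    · simpa using qFib_rec_nat q x t 0
    · -- n = 1 : -1 + 2 = 1
      norm_num [qFib_one, qFib_zero, qFib_neg_one]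
      field_simp
    · -- n = 2 : f 0 = x f (-1) + q^{-2} t f (-2)
      show (0 : K) = x * (q / t) + q ^ (-2 : ℤ) * t * qFibNeg q x t 2
      show (0 : K) = x * (q / t) + q ^ (-2 : ℤ) * t *
        ((qFibNeg q x t 0 - x * qFibNeg q x t 1) * q ^ (0 + 2) / t)
      show (0 : K) = x * (q / t) + q ^ (-2 : ℤ) * t * ((0 - x * (q / t)) * q ^ (0 + 2) / t)
      have : q ^ (-2 : ℤ) = (q ^ (2:ℕ))⁻¹ := by
        rw [zpow_neg, zpow_ofNat]
      rw [this]
      field_simp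
      ring
    · -- n ≥ 3 : all three negSucc
      have e1 : -(((n+3 : ℕ)) : ℤ) + 2 = Int.negSucc n := by
        rw [Int.negSucc_eq]; push_cast; ring
      have e2 : -(((n+3 : ℕ)) : ℤ) + 1 = Int.negSucc (n+1) := by
        rw [Int.negSucc_eq]; push_cast; ring
      have e3 : -(((n+3 : ℕ)) : ℤ) = Int.negSucc (n+2) := by
        rw [Int.negSucc_eq]; push_cast; ring
      rw [e1, e2, e3]
      show qFibNeg q x t (n+1) = x * qFibNeg q x t (n+2) + q ^ (Int.negSucc (n+2)) * t * qFibNeg q x t (n+3)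
      have hrec : qFibNeg q x t (n+3) = (qFibNeg q x t (n+1) - x * qFibNeg q x t (n+2)) * q ^ (n+3) / t := rfl
      rw [hrec]
      have hz : q ^ (Int.negSucc (n+2)) = (q ^ ((n:ℕ)+3))⁻¹ := by
        rw [Int.negSucc_eq, ← zpow_natCast q (n+3), ← zpow_neg]
        push_cast
        ring_nf
      rw [hz]
      have hqq : q ^ ((n:ℕ)+3) ≠ 0 := pow_ne_zero _ hq
      field_simp
      ring

lemma qFib_add (q x t : K) (hq : q ≠ 0) (ht : t ≠ 0) (m n : ℕ) :
    qFib q x t ((n : ℤ) + m) =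
      qFib q x t ((m : ℤ) + 1) * qFib q x (q ^ m * t) n +
      q ^ m * t * qFib q x t m * qFib q x (q ^ (m + 1) * t) ((n : ℤ) - 1) := by
  induction n using Nat.twoStepInduction with
  | zero =>
      simp only [Nat.cast_zero, zero_add, zero_sub, qFib_neg_one, qFib_zero, mul_zero, zero_add]
      have h1 : q ^ (m + 1) * t ≠ 0 := mul_ne_zero (pow_ne_zero _ hq) ht
      field_simp
      ring
  | one =>
      simp only [Nat.cast_one, sub_self, qFib_zero, mul_zero, add_zero]
      rw [qFib_one, mul_one, add_comm (1 : ℤ) (m : ℤ)]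
  | more n ih1 ih2 =>
      have e1 : (((n + 2 : ℕ) : ℤ)) + m = ((n + m : ℕ) : ℤ) + 2 := by push_cast; ring
      have e2 : ((n + m : ℕ) : ℤ) + 1 = ((n + 1 : ℕ) : ℤ) + m := by push_cast; ring
      rw [e1, qFib_rec_nat, e2, ih2,
        show ((n + m : ℕ) : ℤ) = (n : ℤ) + (m : ℤ) by push_cast; ring, ih1]
      -- expand RHS pieces
      have f1 : qFib q x (q ^ m * t) ((n:ℕ) + 2 : ℕ) =
          x * qFib q x (q ^ m * t) ((n:ℕ) + 1 : ℕ) + q ^ n * (q ^ m * t) * qFib q x (q ^ m * t) n := by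
        have := qFib_rec_nat q x (q ^ m * t) n
        rw [show ((n:ℤ) + 2) = (((n + 2 : ℕ) : ℤ)) by push_cast; ring,
          show ((n:ℤ) + 1) = (((n + 1 : ℕ) : ℤ)) by push_cast; ring] at this
        exact this
      have f2 : qFib q x (q ^ (m + 1) * t) (((n + 2 : ℕ) : ℤ) - 1) =
          x * qFib q x (q ^ (m + 1) * t) (((n + 1 : ℕ) : ℤ) - 1) +
          q ^ ((n : ℤ) - 1) * (q ^ (m + 1) * t) * qFib q x (q ^ (m + 1) * t) ((n : ℤ) - 1) := by
        have h1 : q ^ (m + 1) * t ≠ 0 := mul_ne_zero (pow_ne_zero _ hq) ht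
        have := qFib_rec_int q x (q ^ (m + 1) * t) hq h1 ((n : ℤ) - 1)
        rw [show ((n:ℤ) - 1 + 2) = (((n + 2 : ℕ) : ℤ) - 1) by push_cast; ring,
          show ((n:ℤ) - 1 + 1) = (((n + 1 : ℕ) : ℤ) - 1) by push_cast; ring] at this
        exact this
      rw [f1, f2]
      have hzp : q ^ ((n : ℤ) - 1) * (q ^ (m + 1) * t) = q ^ (n + m) * t := by
        rw [zpow_sub_one₀ hq, zpow_natCast]
        field_simp
        ring
      rw [hzp]
      ring

lemma qFib_cassini (q x t : K) (m : ℕ) :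
    qFib q x t ((m : ℤ) + 2) * qFib q x (q * t) m -
      qFib q x t ((m : ℤ) + 1) * qFib q x (q * t) ((m : ℤ) + 1) =
    -((-t) ^ m * q ^ (m + 1).choose 2) := by
  induction m with
  | zero => simp [qFib_zero, qFib_one]
  | succ m ih =>
      rw [show ((m + 1 : ℕ) : ℤ) + 2 = ((m + 1 : ℕ) : ℤ) + 2 from rfl]
      rw [qFib_rec_nat q x t (m + 1)]
      rw [show ((m + 1 : ℕ) : ℤ) + 1 = (m : ℤ) + 2 by push_cast; ring]
      rw [show ((m + 1 : ℕ) : ℤ) = (m : ℤ) + 1 by push_cast; ring]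
      rw [qFib_rec_nat q x (q * t) m]
      rw [show (m + 2).choose 2 = (m + 1).choose 2 + (m + 1) by
        rw [Nat.choose_succ_succ (m + 1) 1, Nat.choose_one_right]; ring]
      linear_combination (-(q ^ (m + 1) * t)) * ih

/-- The matrix `(w i ^ h * z i ^ (k - h))` of values of monomials of degree `k`. -/
noncomputable def vmat (k : ℕ) (w z : Fin (k + 1) → K) : Matrix (Fin (k + 1)) (Fin (k + 1)) K :=
  Matrix.of fun i h => w i ^ (h : ℕ) * z i ^ (k - (h : ℕ))

lemma vmat_shearU (k : ℕ) (w z : Fin (k + 1) → K) (β : K) :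
    (vmat k (fun i => w i + β * z i) z).det = (vmat k w z).det := by
  have hM : vmat k (fun i => w i + β * z i) z =
      vmat k w z * Matrix.of (fun p h : Fin (k + 1) =>
        ((h : ℕ).choose p : K) * β ^ ((h : ℕ) - (p : ℕ))) := by
    ext i h
    rw [Matrix.mul_apply]
    simp only [vmat, Matrix.of_apply]
    rw [Fin.sum_univ_eq_sum_range
      (fun p => w i ^ p * z i ^ (k - p) * (((h : ℕ).choose p : K) * β ^ ((h : ℕ) - p)))]
    rw [add_pow]
    rw [Finset.sum_mul]
    have hsub := Finset.sum_subset
      (f := fun p => w i ^ p * z i ^ (k - p) * (((h : ℕ).choose p : K) * β ^ ((h : ℕ) - p)))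
      (Finset.range_subset_range.2 (Nat.succ_le_succ h.is_le))
    rw [← hsub]
    · apply Finset.sum_congr rfl
      intro p hp
      have hph : p ≤ (h : ℕ) := Nat.lt_succ_iff.1 (Finset.mem_range.1 hp)
      have hzz : z i ^ (k - p) = z i ^ ((h : ℕ) - p) * z i ^ (k - (h : ℕ)) := by
        rw [← pow_add]
        congr 1
        have := h.is_le
        omega
      rw [hzz, mul_pow]
      ring
    · intro p hp hnp
      have : (h : ℕ) < p := by
        simp only [Finset.mem_range] at hp hnp; omega
      rw [Nat.choose_eq_zero_of_lt this]
      push_cast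
      ring
  rw [hM, Matrix.det_mul]
  have hU : (Matrix.of (fun p h : Fin (k + 1) =>
      ((h : ℕ).choose p : K) * β ^ ((h : ℕ) - (p : ℕ)))).det = 1 := by
    rw [Matrix.det_of_upperTriangular]
    · rw [Finset.prod_eq_one]
      intro p _
      simp
    · intro p h hlt
      simp only [id_eq] at hlt
      rw [Matrix.of_apply, Nat.choose_eq_zero_of_lt (by exact_mod_cast hlt)]
      push_cast; ring
  rw [hU, mul_one]

lemma vmat_shearL (k : ℕ) (w z : Fin (k + 1) → K) (γ : K) :
    (vmat k w (fun i => γ * w i + z i)).det = (vmat k w z).det := by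
  have hM : vmat k w (fun i => γ * w i + z i) =
      vmat k w z * Matrix.of (fun p h : Fin (k + 1) =>
        if (h : ℕ) ≤ (p : ℕ) then ((k - (h : ℕ)).choose ((p : ℕ) - h) : K) * γ ^ ((p : ℕ) - h)
        else 0) := by
    ext i h
    rw [Matrix.mul_apply]
    simp only [vmat, Matrix.of_apply]
    rw [Fin.sum_univ_eq_sum_range (fun p => w i ^ p * z i ^ (k - p) *
      (if (h : ℕ) ≤ p then ((k - (h : ℕ)).choose (p - h) : K) * γ ^ (p - (h : ℕ)) else 0))]
    rw [← Finset.sum_subset (show Finset.Ico (h : ℕ) (k + 1) ⊆ Finset.range (k + 1) by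
        rw [Finset.range_eq_Ico]; exact Finset.Ico_subset_Ico (Nat.zero_le _) le_rfl)]
    · rw [Finset.sum_Ico_eq_sum_range]
      have hke : k + 1 - (h : ℕ) = (k - (h : ℕ)) + 1 := by have := h.is_le; omega
      rw [hke, add_pow, Finset.mul_sum]
      apply Finset.sum_congr rfl
      intro r hr
      have hrk : r ≤ k - (h : ℕ) := Nat.lt_succ_iff.1 (Finset.mem_range.1 hr)
      have h1 : (h : ℕ) ≤ (h : ℕ) + r := Nat.le_add_right _ _
      rw [if_pos h1]
      have e1 : (h : ℕ) + r - (h : ℕ) = r := by omega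
      have e2 : k - ((h : ℕ) + r) = (k - (h : ℕ)) - r := by omega
      have e3 : w i ^ ((h : ℕ) + r) = w i ^ (h : ℕ) * w i ^ r := pow_add _ _ _
      rw [e1, e2, e3, mul_pow]
      ring
    · intro p hp hnp
      have : ¬ ((h : ℕ) ≤ p) := by
        simp only [Finset.mem_range, Finset.mem_Ico] at hp hnp
        omega
      rw [if_neg this, mul_zero]
  rw [hM, Matrix.det_mul]
  have hL : (Matrix.of (fun p h : Fin (k + 1) =>
      if (h : ℕ) ≤ (p : ℕ) then ((k - (h : ℕ)).choose ((p : ℕ) - h) : K) * γ ^ ((p : ℕ) - h)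
      else 0)).det = 1 := by
    rw [Matrix.det_of_lowerTriangular]
    · rw [Finset.prod_eq_one]
      intro p _
      simp
    · intro p h hlt
      have : ¬ ((h : ℕ) ≤ (p : ℕ)) := by
        simp only [OrderDual.toDual_lt_toDual] at hlt
        exact not_le.2 (by exact_mod_cast hlt)
      rw [Matrix.of_apply, if_neg this]
  rw [hL, mul_one]

lemma vmat_scale (k : ℕ) (w z : Fin (k + 1) → K) (a d : K) :
    (vmat k (fun i => a * w i) (fun i => d * z i)).det =
      (a * d) ^ (k + 1).choose 2 * (vmat k w z).det := by
  have hM : vmat k (fun i => a * w i) (fun i => d * z i) =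
      Matrix.of (fun i h : Fin (k + 1) =>
        (fun h : Fin (k + 1) => a ^ (h : ℕ) * d ^ (k - (h : ℕ))) h * vmat k w z i h) := by
    ext i h
    simp only [vmat, Matrix.of_apply, mul_pow]
    ring
  rw [hM, Matrix.det_mul_row]
  congr 1
  rw [Finset.prod_mul_distrib, Finset.prod_pow_eq_pow_sum, Finset.prod_pow_eq_pow_sum]
  have h0 : ∑ p ∈ Finset.range (k + 1), p = (k + 1).choose 2 := by
    rw [Finset.sum_range_id, Nat.choose_two_right]
  have h1 : ∑ h : Fin (k + 1), (h : ℕ) = (k + 1).choose 2 := by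
    rw [Fin.sum_univ_eq_sum_range (fun p => p) (k + 1)]
    exact h0
  have h2 : ∑ h : Fin (k + 1), (k - (h : ℕ)) = (k + 1).choose 2 := by
    rw [Fin.sum_univ_eq_sum_range (fun p => k - p) (k + 1), ← Finset.sum_range_reflect]
    rw [← h0]
    apply Finset.sum_congr rfl
    intro p hp
    simp only [Finset.mem_range] at hp
    omega
  rw [h1, h2, mul_pow]

lemma vmat_congr {k : ℕ} {w w' z z' : Fin (k + 1) → K}
    (hw : ∀ i, w i = w' i) (hz : ∀ i, z i = z' i) : vmat k w z = vmat k w' z' := by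
  ext i h
  simp only [vmat, Matrix.of_apply, hw i, hz i]

lemma vmat_det_sym (k : ℕ) (w z : Fin (k + 1) → K) (α β γ δ : K)
    (hΔ : α * δ - β * γ ≠ 0) :
    (vmat k (fun i => α * w i + β * z i) (fun i => γ * w i + δ * z i)).det =
      (α * δ - β * γ) ^ (k + 1).choose 2 * (vmat k w z).det := by
  by_cases hα : α = 0
  · subst hα
    have hβγ : β * γ ≠ 0 := by
      intro h; apply hΔ; rw [zero_mul, zero_sub, h, neg_zero]
    have hβ : β ≠ 0 := fun h => hβγ (by rw [h, zero_mul])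
    -- step 1 : shearL to kill the δ z part
    have t1 : (vmat k (fun i => 0 * w i + β * z i) (fun i => γ * w i + δ * z i)).det =
        (vmat k (fun i => β * z i) (fun i => γ * w i)).det := by
      rw [vmat_congr (w' := fun i => β * z i)
        (z' := fun i => (δ / β) * (β * z i) + γ * w i)
        (fun i => by ring) (fun i => by field_simp; ring)]
      exact vmat_shearL k (fun i => β * z i) (fun i => γ * w i) (δ / β)
    -- step 2 : scale
    have t2 : (vmat k (fun i => β * z i) (fun i => γ * w i)).det =
        (β * γ) ^ (k + 1).choose 2 * (vmat k z w).det :=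
      vmat_scale k z w β γ
    -- step 3 : swap via three shears and a scale
    have a1 : (vmat k (fun i => w i + 1 * z i) z).det = (vmat k w z).det :=
      vmat_shearU k w z 1
    have b1 : (vmat k (fun i => w i + 1 * z i) (fun i => -w i)).det =
        (vmat k (fun i => w i + 1 * z i) z).det := by
      have := vmat_shearL k (fun i => w i + 1 * z i) z (-1)
      rw [vmat_congr (w' := fun i => w i + 1 * z i)
        (z' := fun i => (-1) * (w i + 1 * z i) + z i) (fun i => rfl) (fun i => by ring)]
      exact this
    have c1 : (vmat k z (fun i => -w i)).det =
        (vmat k (fun i => w i + 1 * z i) (fun i => -w i)).det := by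
      have := vmat_shearU k (fun i => w i + 1 * z i) (fun i => -w i) 1
      rw [vmat_congr (w' := fun i => (w i + 1 * z i) + 1 * (-w i))
        (z' := fun i => -w i) (fun i => by ring) (fun i => rfl)]
      exact this
    have d1 : (vmat k z w).det = (1 * (-1)) ^ (k + 1).choose 2 *
        (vmat k z (fun i => -w i)).det := by
      have := vmat_scale k z (fun i => -w i) 1 (-1)
      rw [vmat_congr (w' := fun i => 1 * z i) (z' := fun i => (-1) * (-w i))
        (fun i => by ring) (fun i => by ring)]
      exact this
    rw [t1, t2, d1, c1, b1, a1]
    rw [show (0 : K) * δ - β * γ = ((β * γ) * (1 * (-1))) by ring, mul_pow]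
    ring
  · -- α ≠ 0
    have s3 : (vmat k (fun i => w i + (β / α) * z i) z).det = (vmat k w z).det :=
      vmat_shearU k w z (β / α)
    have s2 : (vmat k (fun i => α * (w i + (β / α) * z i))
        (fun i => ((α * δ - β * γ) / α) * z i)).det =
        (α * ((α * δ - β * γ) / α)) ^ (k + 1).choose 2 *
          (vmat k (fun i => w i + (β / α) * z i) z).det :=
      vmat_scale k (fun i => w i + (β / α) * z i) z α ((α * δ - β * γ) / α)
    have s1 : (vmat k (fun i => α * w i + β * z i) (fun i => γ * w i + δ * z i)).det =
        (vmat k (fun i => α * (w i + (β / α) * z i))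
          (fun i => ((α * δ - β * γ) / α) * z i)).det := by
      rw [vmat_congr (w' := fun i => α * (w i + (β / α) * z i))
        (z' := fun i => (γ / α) * (α * (w i + (β / α) * z i)) +
          ((α * δ - β * γ) / α) * z i)
        (fun i => by field_simp) (fun i => by field_simp; ring)]
      exact vmat_shearL k (fun i => α * (w i + (β / α) * z i))
        (fun i => ((α * δ - β * γ) / α) * z i) (γ / α)
    rw [s1, s2, s3, mul_div_cancel₀ _ hα]

lemma prod_range_skip (g : ℕ → K) (N j' : ℕ) (hj : j' ≤ N) :
    ∏ i ∈ Finset.range (N + 1), g i =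
      g j' * ∏ i ∈ Finset.range N, g (i + if j' ≤ i then 1 else 0) := by
  have hL : ∏ i ∈ Finset.range N, g (i + if j' ≤ i then 1 else 0) =
      (∏ i ∈ Finset.Ico 0 j', g i) * ∏ i ∈ Finset.Ico (j' + 1) (N + 1), g i := by
    rw [Finset.range_eq_Ico, ← Finset.prod_Ico_consecutive _ (Nat.zero_le j') hj]
    congr 1
    · apply Finset.prod_congr rfl
      intro i hi
      have : ¬ (j' ≤ i) := by simp only [Finset.mem_Ico] at hi; omega
      rw [if_neg this, Nat.add_zero]
    · rw [← Finset.prod_Ico_add' g j' N 1]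
      apply Finset.prod_congr rfl
      intro i hi
      have : j' ≤ i := by simp only [Finset.mem_Ico] at hi; omega
      rw [if_pos this]
  rw [hL, Finset.range_eq_Ico,
    ← Finset.prod_Ico_consecutive g (Nat.zero_le j') (by omega : j' ≤ N + 1),
    Finset.prod_eq_prod_Ico_succ_bot (by omega : j' < N + 1) g]
  ring

/-- index of row `i` in the reduced determinant -/
def nnF (m' j' : ℕ) {k' : ℕ} (i : Fin (k' + 1)) : ℕ :=
  (m' + 1) * ((i : ℕ) + if j' ≤ (i : ℕ) then 1 else 0)

noncomputable def wF (q x s : K) (m' j' : ℕ) {k' : ℕ} (i : Fin (k' + 1)) : K :=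
  qFib q x (q ^ (m' + 1) * s) (nnF m' j' i)

noncomputable def zF (q x s : K) (m' j' : ℕ) {k' : ℕ} (i : Fin (k' + 1)) : K :=
  qFib q x (q ^ (m' + 1 + 1) * s) ((nnF m' j' i : ℤ) - 1)

lemma det_vmat_eq_ddet (q x s : K) (m' k' j' : ℕ) :
    (vmat k' (fun i => wF q x s m' j' i) (fun i => zF q x s m' j' i)).det =
      ddet q x (q ^ (m' + 1) * s) 0 (m' + 1) k' j' := by
  rw [ddet]
  congr 1
  ext i h
  simp only [vmat, wF, zF, Matrix.of_apply]
  rw [show (0 : ℤ) + ((m' + 1 : ℕ) : ℤ) * ((i : ℕ) + if j' ≤ (i : ℕ) then 1 else 0) =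
      ((nnF m' j' i : ℕ) : ℤ) by
    by_cases hji : j' ≤ (i : ℕ) <;> simp [nnF, hji] <;> push_cast <;> ring]
  rw [show q * (q ^ (m' + 1) * s) = q ^ (m' + 1 + 1) * s by ring]

lemma qFib_add_w (q x s : K) (hq : q ≠ 0) (hs : s ≠ 0) (m' n : ℕ) :
    qFib q x s ((n : ℤ) + ((m' + 1 : ℕ) : ℤ)) =
      qFib q x s ((m' : ℤ) + 2) * qFib q x (q ^ (m' + 1) * s) n +
      (q ^ (m' + 1) * s * qFib q x s ((m' : ℤ) + 1)) *
        qFib q x (q ^ (m' + 1 + 1) * s) ((n : ℤ) - 1) := by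
  have h := qFib_add q x s hq hs (m' + 1) n
  rw [show ((m' + 1 : ℕ) : ℤ) + 1 = (m' : ℤ) + 2 by push_cast; ring] at h
  rw [show ((m' + 1 : ℕ) : ℤ) = (m' : ℤ) + 1 by push_cast; ring]
  exact h

lemma qFib_add_v (q x s : K) (hq : q ≠ 0) (hs : s ≠ 0) (m' n : ℕ) :
    qFib q x (q * s) ((n : ℤ) + ((m' + 1 : ℕ) : ℤ) - 1) =
      qFib q x (q * s) ((m' : ℤ) + 1) * qFib q x (q ^ (m' + 1) * s) n +
      (q ^ (m' + 1) * s * qFib q x (q * s) (m' : ℤ)) *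
        qFib q x (q ^ (m' + 1 + 1) * s) ((n : ℤ) - 1) := by
  have h := qFib_add q x (q * s) hq (mul_ne_zero hq hs) m' n
  rw [show q ^ m' * (q * s) = q ^ (m' + 1) * s by ring,
    show q ^ (m' + 1) * (q * s) = q ^ (m' + 1 + 1) * s by ring] at h
  rw [show (n : ℤ) + ((m' + 1 : ℕ) : ℤ) - 1 = (n : ℤ) + (m' : ℤ) by push_cast; ring]
  exact h

lemma delta_val (q x s : K) (m' : ℕ) :
    qFib q x s ((m' : ℤ) + 2) * (q ^ (m' + 1) * s * qFib q x (q * s) (m' : ℤ)) -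
      (q ^ (m' + 1) * s * qFib q x s ((m' : ℤ) + 1)) * qFib q x (q * s) ((m' : ℤ) + 1) =
    (-s) ^ (m' + 1) * q ^ ((m' + 1 + 1).choose 2) := by
  rw [show (m' + 1 + 1).choose 2 = (m' + 1).choose 2 + (m' + 1) by
    rw [Nat.choose_succ_succ (m' + 1) 1, Nat.choose_one_right]; ring]
  linear_combination (q ^ (m' + 1) * s) * qFib_cassini q x s m'

lemma prod_u (q x s : K) (m' k' j' : ℕ) (hjk : j' ≤ k' + 1) :
    qFac q x s (k' + 1 + 1) (m' + 1) =
      qFib q x s (((j' + 1 : ℕ) : ℤ) * ((m' + 1 : ℕ) : ℤ)) *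
        ∏ i : Fin (k' + 1), qFib q x s ((nnF m' j' i : ℤ) + ((m' + 1 : ℕ) : ℤ)) := by
  have e0 : qFib q x s (((j' : ℤ) + 1) * ((m' + 1 : ℕ) : ℤ)) =
      qFib q x s (((j' + 1 : ℕ) : ℤ) * ((m' + 1 : ℕ) : ℤ)) := by
    congr 1 <;> (push_cast; ring)
  have e1 : ∏ i ∈ Finset.range (k' + 1),
      qFib q x s ((((i + if j' ≤ i then 1 else 0 : ℕ) : ℤ) + 1) * ((m' + 1 : ℕ) : ℤ)) =
      ∏ i : Fin (k' + 1), qFib q x s ((nnF m' j' i : ℤ) + ((m' + 1 : ℕ) : ℤ)) := by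
    simp only [nnF]
    rw [Fin.prod_univ_eq_prod_range
      (fun i => qFib q x s ((((m' + 1) * (i + if j' ≤ i then 1 else 0) : ℕ) : ℤ) +
        ((m' + 1 : ℕ) : ℤ))) (k' + 1)]
    apply Finset.prod_congr rfl
    intro i _
    congr 1
    split_ifs <;> push_cast <;> ring
  rw [qFac, prod_range_skip (fun i => qFib q x s (((i : ℤ) + 1) * ((m' + 1 : ℕ) : ℤ)))
    (k' + 1) j' hjk, e0, e1]

lemma submatrix_eq (q x s : K) (hq : q ≠ 0) (hs : s ≠ 0) (m' k' j' : ℕ) :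
    ((Matrix.of fun i h : Fin (k' + 1 + 1) =>
        qFib q x s (0 + ((m' + 1 : ℕ) : ℤ) * ((i : ℕ) + if j' + 1 ≤ (i : ℕ) then 1 else 0)) ^
            (h : ℕ) *
          qFib q x (q * s)
              (0 + ((m' + 1 : ℕ) : ℤ) * ((i : ℕ) + if j' + 1 ≤ (i : ℕ) then 1 else 0) - 1) ^
            (k' + 1 - (h : ℕ))).submatrix Fin.succ Fin.succ) =
      Matrix.of (fun i h : Fin (k' + 1) =>
        (fun i' : Fin (k' + 1) =>
          qFib q x s ((m' : ℤ) + 2) * wF q x s m' j' i' +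
            (q ^ (m' + 1) * s * qFib q x s ((m' : ℤ) + 1)) * zF q x s m' j' i') i *
        vmat k' (fun i' => qFib q x s ((m' : ℤ) + 2) * wF q x s m' j' i' +
            (q ^ (m' + 1) * s * qFib q x s ((m' : ℤ) + 1)) * zF q x s m' j' i')
          (fun i' => qFib q x (q * s) ((m' : ℤ) + 1) * wF q x s m' j' i' +
            (q ^ (m' + 1) * s * qFib q x (q * s) (m' : ℤ)) * zF q x s m' j' i') i h) := by
  ext i h
  simp only [Matrix.submatrix_apply, Matrix.of_apply, Fin.val_succ, vmat]
  simp only [show (0 : ℤ) + ((m' + 1 : ℕ) : ℤ) * ((((i : ℕ) + 1 : ℕ) : ℤ) +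
      if j' + 1 ≤ (i : ℕ) + 1 then 1 else 0) = ((nnF m' j' i : ℕ) : ℤ) + ((m' + 1 : ℕ) : ℤ) by
    simp only [nnF]
    simp only [show (j' + 1 ≤ (i : ℕ) + 1) ↔ (j' ≤ (i : ℕ)) from by omega]
    split_ifs <;> push_cast <;> ring]
  rw [show k' + 1 - ((h : ℕ) + 1) = k' - (h : ℕ) by omega]
  rw [pow_succ']
  rw [qFib_add_w q x s hq hs m' (nnF m' j' i), qFib_add_v q x s hq hs m' (nnF m' j' i)]
  simp only [wF, zF]
  ring

theorem ddet_rec_aux (q x s : K) (hq : q ≠ 0) (hs : s ≠ 0) (m' k' j' : ℕ)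
    (hjk : j' ≤ k' + 1)
    (hf : qFib q x s (((j' + 1 : ℕ) : ℤ) * ((m' + 1 : ℕ) : ℤ)) ≠ 0) :
    ddet q x s 0 (m' + 1) (k' + 1) (j' + 1) =
      s ^ (-((k' + 1 : ℕ) : ℤ)) *
        (qFac q x s (k' + 1 + 1) (m' + 1) /
          qFib q x s (((j' + 1 : ℕ) : ℤ) * ((m' + 1 : ℕ) : ℤ))) *
      (-s) ^ ((m' + 1) * (k' + 1).choose 2) *
      q ^ ((k' + 1).choose 2 * (m' + 1 + 1).choose 2) *
      ddet q x (q ^ (m' + 1) * s) 0 (m' + 1) k' j' := by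
  have hqs : q * s ≠ 0 := mul_ne_zero hq hs
  -- notation
  rw [ddet, Matrix.det_succ_row_zero, Finset.sum_eq_single (0 : Fin (k' + 1 + 1))]
  rotate_left
  · intro b _ hb
    have hb' : (b : ℕ) ≠ 0 := by
      intro h; exact hb (Fin.ext h)
    simp only [Matrix.of_apply, Fin.val_zero, Nat.cast_zero]
    simp only [show ¬ (j' + 1 ≤ 0) by omega, ↓reduceIte]
    rw [show (0 : ℤ) + ((m' + 1 : ℕ) : ℤ) * (0 + 0) = 0 by ring, qFib_zero,
      zero_pow hb']
    ring
  · intro h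
    exact absurd (Finset.mem_univ _) h
  · -- the main term
    rw [Fin.succAbove_zero, submatrix_eq q x s hq hs m' k' j', Matrix.det_mul_column,
      vmat_det_sym k' (wF q x s m' j') (zF q x s m' j')
        (qFib q x s ((m' : ℤ) + 2)) (q ^ (m' + 1) * s * qFib q x s ((m' : ℤ) + 1))
        (qFib q x (q * s) ((m' : ℤ) + 1)) (q ^ (m' + 1) * s * qFib q x (q * s) (m' : ℤ))
        (by rw [delta_val q x s m']
            exact mul_ne_zero (pow_ne_zero _ (neg_ne_zero.2 hs)) (pow_ne_zero _ hq)),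
      delta_val q x s m', det_vmat_eq_ddet q x s m' k' j']
    have hP : (∏ i : Fin (k' + 1),
        (qFib q x s ((m' : ℤ) + 2) * wF q x s m' j' i +
          (q ^ (m' + 1) * s * qFib q x s ((m' : ℤ) + 1)) * zF q x s m' j' i)) =
        qFac q x s (k' + 1 + 1) (m' + 1) /
          qFib q x s (((j' + 1 : ℕ) : ℤ) * ((m' + 1 : ℕ) : ℤ)) := by
      have h1 : ∀ i : Fin (k' + 1),
          (qFib q x s ((m' : ℤ) + 2) * wF q x s m' j' i +
            (q ^ (m' + 1) * s * qFib q x s ((m' : ℤ) + 1)) * zF q x s m' j' i) =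
          qFib q x s ((nnF m' j' i : ℤ) + ((m' + 1 : ℕ) : ℤ)) := by
        intro i
        simp only [wF, zF]
        exact (qFib_add_w q x s hq hs m' (nnF m' j' i)).symm
      rw [Finset.prod_congr rfl (fun i _ => h1 i), prod_u q x s m' k' j' hjk,
        mul_div_cancel_left₀ _ hf]
    rw [hP]
    simp only [Matrix.of_apply, Fin.val_zero, Nat.cast_zero, pow_zero, one_mul]
    simp only [show ¬ (j' + 1 ≤ 0) by omega, ↓reduceIte]
    rw [show (0 : ℤ) + ((m' + 1 : ℕ) : ℤ) * (0 + 0) - 1 = -1 by ring, qFib_neg_one,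
      Nat.sub_zero]
    have hqqs : q / (q * s) = s⁻¹ := by field_simp
    have hsz : s ^ (-((k' + 1 : ℕ) : ℤ)) = (s⁻¹) ^ (k' + 1) := by
      rw [zpow_neg, zpow_natCast, inv_pow]
    rw [hqqs, hsz, mul_pow, ← pow_mul, ← pow_mul,
      Nat.mul_comm ((m' + 1 + 1).choose 2) ((k' + 1).choose 2)]
    ring

theorem ddet_recurrence (q x s : K) (hq : q ≠ 0) (hs : s ≠ 0)
    (m k j : ℕ) (hm : 1 ≤ m) (hk : 1 ≤ k) (hj : 1 ≤ j) (hjk : j ≤ k + 1)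
    (hf : qFib q x s ((j : ℤ) * m) ≠ 0) :
    ddet q x s 0 m k j =
      s ^ (-(k : ℤ)) * (qFac q x s (k + 1) m / qFib q x s ((j : ℤ) * m)) *
      (-s) ^ (m * k.choose 2) * q ^ (k.choose 2 * (m + 1).choose 2) *
      ddet q x (q ^ m * s) 0 m (k - 1) (j - 1) := by
  obtain ⟨m', rfl⟩ : ∃ m'', m = m'' + 1 := ⟨m - 1, by omega⟩
  obtain ⟨k', rfl⟩ : ∃ k'', k = k'' + 1 := ⟨k - 1, by omega⟩
  obtain ⟨j', rfl⟩ : ∃ j'', j = j'' + 1 := ⟨j - 1, by omega⟩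
  simp only [Nat.add_sub_cancel]
  exact ddet_rec_aux q x s hq hs m' k' j' (by omega) hf
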